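/- Let k ≥ 2, and suppose N = M^k where M ≡ 0 (mod q) for every prime q with (q−1) | k and M − 1 is not prime. Then N cannot be written as N = p^k + η with p prime, p^k < N, and Ω(η) < d(k). -/

import Mathlib

open Polynomial Finset

/-- Homogenized cyclotomic value: `p^φ(d) Φ_d(M/p)` as an integer. -/
noncomputable def zc (d M p : ℕ) : ℤ :=
  ∑ i ∈ Finset.range (d.totient + 1),
    (Polynomial.cyclotomic d ℤ).coeff i * (M : ℤ) ^ i * (p : ℤ) ^ (d.totient - i)

lemma zc_cast (d M p : ℕ) (K : Type*) [Field K] [CharZero K] (hp : p ≠ 0) :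
    ((zc d M p : ℤ) : K) =
      (p : K) ^ d.totient * (Polynomial.cyclotomic d K).eval ((M : K) / (p : K)) := by
  have hp' : (p : K) ≠ 0 := Nat.cast_ne_zero.mpr hp
  have hmap : (Polynomial.cyclotomic d ℤ).map (Int.castRingHom K) = cyclotomic d K :=
    map_cyclotomic_int d K
  rw [eval_eq_sum_range, ← hmap]
  rw [natDegree_map_eq_of_injective (Int.cast_injective)]
  rw [natDegree_cyclotomic]
  rw [Finset.mul_sum]
  unfold zc
  push_cast
  refine Finset.sum_congr rfl fun i hi => ?_
  have hi' : i ≤ d.totient := Nat.lt_succ_iff.mp (Finset.mem_range.mp hi)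
  rw [coeff_map]
  simp only [Int.coe_castRingHom]
  have hpow : (p:K) ^ d.totient = (p:K) ^ (d.totient - i) * (p:K) ^ i := by
    rw [← pow_add]; congr 1; omega
  rw [div_pow, hpow]
  field_simp

lemma two_le_zc (d M p : ℕ) (hd : 0 < d) (hp : 1 ≤ p) (hpM : p + 2 ≤ M) :
    2 ≤ zc d M p := by
  have hp0 : p ≠ 0 := by omega
  have hpR : (0:ℝ) < p := by exact_mod_cast hp
  have hMp : (p:ℝ) + 2 ≤ M := by exact_mod_cast hpM
  have hx : (1:ℝ) < (M:ℝ) / p := by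
    rw [lt_div_iff₀ hpR]; linarith
  have key := zc_cast d M p ℝ hp0
  rcases eq_or_lt_of_le (show 1 ≤ d from hd) with h1 | h2
  · -- d = 1
    have : d = 1 := h1.symm
    subst this
    rw [cyclotomic_one, eval_sub, eval_X, eval_one, Nat.totient_one, pow_one] at key
    have : ((zc 1 M p : ℤ) : ℝ) = (M : ℝ) - p := by
      rw [key]; field_simp
    have h2 : (2:ℝ) ≤ ((zc 1 M p : ℤ) : ℝ) := by rw [this]; linarith
    exact_mod_cast h2
  · -- 2 ≤ d
    have hd2 : 2 ≤ d := h2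
    have hlt := Polynomial.sub_one_pow_totient_lt_cyclotomic_eval hd2 hx
    have htot : 1 ≤ d.totient := Nat.totient_pos.mpr hd
    have hstep : ((M:ℝ)/p - 1) ^ d.totient = ((M:ℝ) - p) ^ d.totient / (p:ℝ) ^ d.totient := by
      rw [div_sub' (ne_of_gt hpR), mul_one, div_pow]
    have hge : (2:ℝ) ≤ ((M:ℝ) - p) ^ d.totient := by
      calc (2:ℝ) = 2 ^ 1 := by norm_num
      _ ≤ 2 ^ d.totient := by
          apply pow_le_pow_right₀ (by norm_num) htot
      _ ≤ ((M:ℝ) - p) ^ d.totient := by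
          apply pow_le_pow_left₀ (by norm_num) (by linarith)
    have : (2:ℝ) < ((zc d M p : ℤ) : ℝ) := by
      rw [key]
      have := mul_lt_mul_of_pos_left hlt (pow_pos hpR d.totient)
      rw [hstep, mul_div_cancel₀ _ (pow_ne_zero _ (ne_of_gt hpR))] at this
      linarith
    have : (2:ℤ) ≤ zc d M p := by exact_mod_cast this.le
    exact this

lemma prod_zc (k M p : ℕ) (hk : 0 < k) (hp : p ≠ 0) :
    ∏ d ∈ k.divisors, zc d M p = (M : ℤ) ^ k - (p : ℤ) ^ k := by
  have hp' : ((p:ℚ)) ≠ 0 := Nat.cast_ne_zero.mpr hp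
  have : ((∏ d ∈ k.divisors, zc d M p : ℤ) : ℚ) = ((M:ℚ))^k - (p:ℚ)^k := by
    push_cast
    rw [Finset.prod_congr rfl fun d _ => zc_cast d M p ℚ hp]
    rw [Finset.prod_mul_distrib, Finset.prod_pow_eq_pow_sum, Nat.sum_totient]
    have := Polynomial.prod_cyclotomic_eq_X_pow_sub_one hk ℚ
    rw [← Polynomial.eval_prod, this, eval_sub, eval_pow, eval_X, eval_one, div_pow,
      mul_sub, mul_one, mul_div_cancel₀ _ (pow_ne_zero _ hp')]
  exact_mod_cast this

lemma omega_prod (s : Finset ℕ) (f : ℕ → ℕ) (hf : ∀ d ∈ s, 2 ≤ f d) :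
    s.card ≤ (∏ d ∈ s, f d).primeFactorsList.length := by
  classical
  induction s using Finset.induction_on with
  | empty => simp
  | insert a s ha ih =>
    rw [Finset.prod_insert ha, Finset.card_insert_of_notMem ha]
    have hfa : 2 ≤ f a := hf a (Finset.mem_insert_self a s)
    have hprod : ∏ d ∈ s, f d ≠ 0 :=
      Finset.prod_ne_zero_iff.mpr fun d hd => by have := hf d (Finset.mem_insert_of_mem hd); omega
    have hperm := Nat.perm_primeFactorsList_mul (a := f a) (b := ∏ d ∈ s, f d)
      (by omega) hprod
    rw [hperm.length_eq, List.length_append]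
    have h1 : 1 ≤ (f a).primeFactorsList.length := by
      obtain ⟨q, hq, hqd⟩ := Nat.exists_prime_and_dvd (show f a ≠ 1 by omega)
      have : q ∈ (f a).primeFactorsList :=
        (Nat.mem_primeFactorsList (show f a ≠ 0 by omega)).mpr ⟨hq, hqd⟩
      exact List.length_pos_iff.mpr (List.ne_nil_of_mem this)
    have := ih fun d hd => hf d (Finset.mem_insert_of_mem hd)
    omega

theorem stmt_19 (k M : ℕ) (hk : 2 ≤ k) (hMpos : 0 < M)
    (hM : ∀ q : ℕ, q.Prime → (q - 1) ∣ k → q ∣ M) (hM1 : ¬ Nat.Prime (M - 1)) :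
    ¬ ∃ p η : ℕ, p.Prime ∧ p ^ k < M ^ k ∧ M ^ k = p ^ k + η ∧
      η.primeFactorsList.length < k.divisors.card := by
  rintro ⟨p, η, hp, hlt, heq, hΩ⟩
  have hk0 : 0 < k := by omega
  have hpM : p < M := by
    by_contra h
    push_neg at h
    exact absurd (Nat.pow_le_pow_left h k) (by omega)
  have hpM2 : p + 2 ≤ M := by
    rcases Nat.lt_or_ge (p + 1) M with h | h
    · omega
    · exfalso
      have : p = M - 1 := by omega
      exact hM1 (this ▸ hp)
  have hp0 : p ≠ 0 := hp.ne_zero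
  -- η as an integer product
  have hηZ : (η : ℤ) = ∏ d ∈ k.divisors, zc d M p := by
    rw [prod_zc k M p hk0 hp0]
    have : (M:ℤ)^k = (p:ℤ)^k + η := by exact_mod_cast heq
    omega
  set f : ℕ → ℕ := fun d => (zc d M p).toNat with hf
  have hfd : ∀ d ∈ k.divisors, 2 ≤ f d := by
    intro d hd
    have hdpos : 0 < d := Nat.pos_of_mem_divisors hd
    have := two_le_zc d M p hdpos hp.one_le hpM2
    simp only [hf]
    omega
  have hηprod : η = ∏ d ∈ k.divisors, f d := by
    have : (η : ℤ) = ((∏ d ∈ k.divisors, f d : ℕ) : ℤ) := by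
      rw [hηZ]
      push_cast
      refine Finset.prod_congr rfl fun d hd => ?_
      have hdpos : 0 < d := Nat.pos_of_mem_divisors hd
      have h2 := two_le_zc d M p hdpos hp.one_le hpM2
      simp only [hf]
      omega
    exact_mod_cast this
  have := omega_prod k.divisors f hfd
  rw [← hηprod] at this
  omega
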